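/- Let A be an m×n complex matrix, M (m×m) and N (n×n) Hermitian positive definite matrices, and B an m×n matrix such that A = U B V*, where U (m×m) satisfies U* M U = I and V (n×n) satisfies V* N^{-1} V = I. Then A†_{M,N} = N^{-1} V B† U* M. -/
import Mathlib


open Matrix Filter Topology
open scoped ComplexOrder

/-- The four Penrose equations for the ordinary Moore-Penrose inverse. -/
def IsMP {m n : ℕ} (A : Matrix (Fin m) (Fin n) ℂ) (X : Matrix (Fin n) (Fin m) ℂ) : Prop :=
  A * X * A = A ∧ X * A * X = X ∧ (A * X)ᴴ = A * X ∧ (X * A)ᴴ = X * A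

/-- The four equations characterizing the weighted Moore-Penrose inverse of `A`
with respect to the weights `(M, N)`. -/
def IsWMP {m n : ℕ} (M : Matrix (Fin m) (Fin m) ℂ) (N : Matrix (Fin n) (Fin n) ℂ)
    (A : Matrix (Fin m) (Fin n) ℂ) (X : Matrix (Fin n) (Fin m) ℂ) : Prop :=
  A * X * A = A ∧ X * A * X = X ∧ (M * A * X)ᴴ = M * A * X ∧ (N * X * A)ᴴ = N * X * A

/-- if A = U B V* with U* M U = I and V* N⁻¹ V = I,
then A†_{M,N} = N⁻¹ V B† U* M. -/
lemma wmp_uniq {m n : ℕ} {M : Matrix (Fin m) (Fin m) ℂ} {N : Matrix (Fin n) (Fin n) ℂ}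
    {A : Matrix (Fin m) (Fin n) ℂ} {X Z : Matrix (Fin n) (Fin m) ℂ}
    (hM : M.PosDef) (hN : N.PosDef) (hX : IsWMP M N A X) (hZ : IsWMP M N A Z) :
    X = Z := by
  obtain ⟨x1, x2, x3, x4⟩ := hX
  obtain ⟨z1, z2, z3, z4⟩ := hZ
  have hMH : Mᴴ = M := hM.isHermitian
  have hNH : Nᴴ = N := hN.isHermitian
  have hMd : IsUnit M.det := hM.det_pos.ne'.isUnit
  have hNd : IsUnit N.det := hN.det_pos.ne'.isUnit
  have x1' : A * (X * A) = A := by rw [← Matrix.mul_assoc]; exact x1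
  have z1' : A * (Z * A) = A := by rw [← Matrix.mul_assoc]; exact z1
  have x2' : X * (A * X) = X := by rw [← Matrix.mul_assoc]; exact x2
  have z2' : Z * (A * Z) = Z := by rw [← Matrix.mul_assoc]; exact z2
  have x3' : Xᴴ * (Aᴴ * M) = M * (A * X) := by
    have := x3; simp only [Matrix.conjTranspose_mul, hMH, Matrix.mul_assoc] at this
    simpa [Matrix.mul_assoc] using this
  have z3' : Zᴴ * (Aᴴ * M) = M * (A * Z) := by
    have := z3; simp only [Matrix.conjTranspose_mul, hMH, Matrix.mul_assoc] at this
    simpa [Matrix.mul_assoc] using this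
  have x4' : Aᴴ * (Xᴴ * N) = N * (X * A) := by
    have := x4; simp only [Matrix.conjTranspose_mul, hNH, Matrix.mul_assoc] at this
    simpa [Matrix.mul_assoc] using this
  have z4' : Aᴴ * (Zᴴ * N) = N * (Z * A) := by
    have := z4; simp only [Matrix.conjTranspose_mul, hNH, Matrix.mul_assoc] at this
    simpa [Matrix.mul_assoc] using this
  have key1 : M * (A * X) = M * (A * Z) := by
    calc M * (A * X) = Xᴴ * (Aᴴ * M) := x3'.symm
      _ = Xᴴ * ((A * (Z * A))ᴴ * M) := by rw [z1']
      _ = Xᴴ * (Aᴴ * (Zᴴ * (Aᴴ * M))) := by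
            simp only [Matrix.conjTranspose_mul, Matrix.mul_assoc]
      _ = Xᴴ * (Aᴴ * (M * (A * Z))) := by rw [z3']
      _ = (Xᴴ * (Aᴴ * M)) * (A * Z) := by simp only [Matrix.mul_assoc]
      _ = (M * (A * X)) * (A * Z) := by rw [x3']
      _ = M * ((A * (X * A)) * Z) := by simp only [Matrix.mul_assoc]
      _ = M * (A * Z) := by rw [x1']
  have key2 : N * (X * A) = N * (Z * A) := by
    calc N * (X * A) = Aᴴ * (Xᴴ * N) := x4'.symm
      _ = (A * (Z * A))ᴴ * (Xᴴ * N) := by rw [z1']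
      _ = Aᴴ * (Zᴴ * (Aᴴ * (Xᴴ * N))) := by
            simp only [Matrix.conjTranspose_mul, Matrix.mul_assoc]
      _ = Aᴴ * (Zᴴ * (N * (X * A))) := by rw [x4']
      _ = (Aᴴ * (Zᴴ * N)) * (X * A) := by simp only [Matrix.mul_assoc]
      _ = (N * (Z * A)) * (X * A) := by rw [z4']
      _ = N * (Z * (A * (X * A))) := by simp only [Matrix.mul_assoc]
      _ = N * (Z * A) := by rw [x1']
  have hAX : A * X = A * Z := by
    have := congrArg (fun W => M⁻¹ * W) key1
    simpa [← Matrix.mul_assoc, Matrix.nonsing_inv_mul M hMd] using this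
  have hXA : X * A = Z * A := by
    have := congrArg (fun W => N⁻¹ * W) key2
    simpa [← Matrix.mul_assoc, Matrix.nonsing_inv_mul N hNd] using this
  calc X = X * (A * X) := x2'.symm
    _ = X * (A * Z) := by rw [hAX]
    _ = (X * A) * Z := by rw [Matrix.mul_assoc]
    _ = (Z * A) * Z := by rw [hXA]
    _ = Z := z2

theorem stmt_1 {m n : ℕ} (A B : Matrix (Fin m) (Fin n) ℂ)
    (M U : Matrix (Fin m) (Fin m) ℂ) (N V : Matrix (Fin n) (Fin n) ℂ)
    (hM : M.PosDef) (hN : N.PosDef)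
    (hU : Uᴴ * M * U = 1) (hV : Vᴴ * N⁻¹ * V = 1)
    (hA : A = U * B * Vᴴ)
    (Y : Matrix (Fin n) (Fin m) ℂ) (hY : IsMP B Y) :
    IsWMP M N A (N⁻¹ * V * Y * Uᴴ * M) ∧
      ∀ X, IsWMP M N A X → X = N⁻¹ * V * Y * Uᴴ * M := by
  obtain ⟨hY1, hY2, hY3, hY4⟩ := hY
  have hMH : Mᴴ = M := hM.isHermitian
  have hNH : Nᴴ = N := hN.isHermitian
  have hNd : IsUnit N.det := hN.det_pos.ne'.isUnit
  have hNiH : (N⁻¹)ᴴ = N⁻¹ := by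
    rw [Matrix.conjTranspose_nonsing_inv, hNH]
  have cU1 : ∀ {k : ℕ} (C : Matrix (Fin m) (Fin k) ℂ), Uᴴ * (M * (U * C)) = C := by
    intro k C
    rw [← Matrix.mul_assoc, ← Matrix.mul_assoc, hU, Matrix.one_mul]
  have cV1 : ∀ {k : ℕ} (C : Matrix (Fin n) (Fin k) ℂ), Vᴴ * (N⁻¹ * (V * C)) = C := by
    intro k C
    rw [← Matrix.mul_assoc, ← Matrix.mul_assoc, hV, Matrix.one_mul]
  have cN : ∀ {k : ℕ} (C : Matrix (Fin n) (Fin k) ℂ), N * (N⁻¹ * C) = C := by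
    intro k C
    rw [← Matrix.mul_assoc, Matrix.mul_nonsing_inv N hNd, Matrix.one_mul]
  have cBY : ∀ {k : ℕ} (C : Matrix (Fin n) (Fin k) ℂ), B * (Y * (B * C)) = B * C := by
    intro k C
    rw [← Matrix.mul_assoc, ← Matrix.mul_assoc, hY1]
  have cYB : ∀ {k : ℕ} (C : Matrix (Fin m) (Fin k) ℂ), Y * (B * (Y * C)) = Y * C := by
    intro k C
    rw [← Matrix.mul_assoc, ← Matrix.mul_assoc, hY2]
  have hBYh : Yᴴ * Bᴴ = B * Y := by rw [← Matrix.conjTranspose_mul, hY3]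
  have hYBh : Bᴴ * Yᴴ = Y * B := by rw [← Matrix.conjTranspose_mul, hY4]
  have cBYh : ∀ {k : ℕ} (C : Matrix (Fin m) (Fin k) ℂ), Yᴴ * (Bᴴ * C) = B * (Y * C) := by
    intro k C
    rw [← Matrix.mul_assoc, hBYh, Matrix.mul_assoc]
  have cYBh : ∀ {k : ℕ} (C : Matrix (Fin n) (Fin k) ℂ), Bᴴ * (Yᴴ * C) = Y * (B * C) := by
    intro k C
    rw [← Matrix.mul_assoc, hYBh, Matrix.mul_assoc]
  have hZ : IsWMP M N A (N⁻¹ * V * Y * Uᴴ * M) := by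
    refine ⟨?_, ?_, ?_, ?_⟩
    · simp only [hA, Matrix.mul_assoc, cV1, cU1, cBY, cYB]
    · simp only [hA, Matrix.mul_assoc, cV1, cU1, cBY, cYB]
    · have e : M * A * (N⁻¹ * V * Y * Uᴴ * M) = M * (U * (B * (Y * (Uᴴ * M)))) := by
        simp only [hA, Matrix.mul_assoc, cV1]
      rw [e]
      simp only [Matrix.conjTranspose_mul, Matrix.conjTranspose_conjTranspose, hMH,
        Matrix.mul_assoc, cBYh]
    · have e : N * (N⁻¹ * V * Y * Uᴴ * M) * A = V * (Y * (B * Vᴴ)) := by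
        simp only [hA, Matrix.mul_assoc, cU1, cN]
      rw [e]
      simp only [Matrix.conjTranspose_mul, Matrix.conjTranspose_conjTranspose,
        Matrix.mul_assoc, cYBh]
  exact ⟨hZ, fun X hX => wmp_uniq hM hN hX hZ⟩
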